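/- Let G be a finite connected simple graph that has an independent [1,2]-set. Then there exist a spanning tree T of G and an independent [1,2]-set S of T such that every edge e = uv of G that is not an edge of T satisfies one of the following (after possibly swapping u and v): (type A) both u ∉ S and v ∉ S; or (type B) v ∈ S, u ∉ S, u has exactly one neighbor in S with respect to the tree T, and u and v lie in the same connected component of the forest obtained from T by deleting every edge of T both of whose endpoints lie outside S. -/

import Mathlib

/-- A set of vertices is independent: no two of its vertices are adjacent. -/
def IndepSet {V : Type*} (G : SimpleGraph V) (S : Set V) : Prop :=
  ∀ u ∈ S, ∀ w ∈ S, ¬ G.Adj u w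

/-- An independent [1,2]-set: an independent set such that every vertex outside it
has at least one and at most two neighbors in it. -/
def IsInd12Set {V : Type*} (G : SimpleGraph V) (S : Set V) : Prop :=
  IndepSet G S ∧
    ∀ u ∉ S, 1 ≤ (S ∩ G.neighborSet u).ncard ∧ (S ∩ G.neighborSet u).ncard ≤ 2

/-- The forest obtained from `T` by deleting every edge of `T` both of whose
endpoints lie outside `S`. -/
def forestOf {V : Type*} (T : SimpleGraph V) (S : Set V) : SimpleGraph V where
  Adj a b := T.Adj a b ∧ (a ∈ S ∨ b ∈ S)
  symm := ⟨fun _ _ h => ⟨h.1.symm, h.2.symm⟩⟩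
  loopless := ⟨fun a h => T.loopless.irrefl a h.1⟩

/-- Type B condition for the ordered pair (u, v) with respect to tree `T` and set `S`. -/
def TypeB {V : Type*} (T : SimpleGraph V) (S : Set V) (u v : V) : Prop :=
  v ∈ S ∧ u ∉ S ∧ (S ∩ T.neighborSet u).ncard = 1 ∧ (forestOf T S).Reachable u v

open SimpleGraph

section Aux

variable {V : Type*}

lemma aux_isAcyclic_anti {F H : SimpleGraph V} (h : F ≤ H) (hH : H.IsAcyclic) : F.IsAcyclic :=
  fun _ c hc => hH (c.mapLe h) ((Walk.mapLe_isCycle h).mpr hc)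

lemma aux_edge_le {H : SimpleGraph V} {u v : V} (h : H.Adj u v) : edge u v ≤ H := by
  intro x y hxy
  rw [edge_adj] at hxy
  rcases hxy.1 with ⟨rfl, rfl⟩ | ⟨rfl, rfl⟩
  · exact h
  · exact h.symm

lemma aux_reachable_of_not_isAcyclic_sup_edge {F : SimpleGraph V} {u v : V}
    (hF : F.IsAcyclic) (h : ¬ (F ⊔ edge u v).IsAcyclic) : F.Reachable u v := by
  by_cases hne : u = v
  · subst hne
    exact Reachable.refl u
  simp only [IsAcyclic, not_forall, not_not] at h
  obtain ⟨a, c, hc⟩ := h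
  by_cases he : s(u, v) ∈ c.edges
  · have hreach := ((adj_and_reachable_delete_edges_iff_exists_cycle
      (G := F ⊔ edge u v)).2 ⟨a, c, hc, he⟩).2
    refine hreach.mono ?_
    intro x y hxy
    rw [deleteEdges_adj, sup_adj] at hxy
    rcases hxy.1 with h1 | h1
    · exact h1
    · exact (hxy.2 (by rw [edge_adj] at h1; rcases h1.1 with ⟨rfl, rfl⟩ | ⟨rfl, rfl⟩ <;> simp)).elim
  · exfalso
    have hsub : ∀ e ∈ c.edges, e ∈ F.edgeSet := by
      intro e hec
      have hmem := c.edges_subset_edgeSet hec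
      rw [edgeSet_sup, Set.mem_union] at hmem
      rcases hmem with h1 | h2
      · exact h1
      · rw [edge_edgeSet_of_ne hne, Set.mem_singleton_iff] at h2
        exact absurd (h2 ▸ hec) he
    exact hF (c.transfer F hsub) (hc.transfer hsub)

lemma aux_exists_maximal_acyclic [Finite V] {F H : SimpleGraph V} (hFH : F ≤ H)
    (hF : F.IsAcyclic) :
    ∃ T : SimpleGraph V, F ≤ T ∧ T ≤ H ∧ T.IsAcyclic ∧
      ∀ K, T ≤ K → K ≤ H → K.IsAcyclic → K = T := by
  classical
  have hfin : Finite (SimpleGraph V) :=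
    Finite.of_injective (fun G => G.Adj) (fun a b hab => SimpleGraph.ext hab)
  have hPfin : {K : SimpleGraph V | F ≤ K ∧ K ≤ H ∧ K.IsAcyclic}.Finite := Set.toFinite _
  obtain ⟨T, hTP, hmax⟩ := hPfin.toFinset.exists_maximal
    (by rw [Finset.nonempty_iff_ne_empty]
        intro hemp
        have : F ∈ hPfin.toFinset := by
          rw [Set.Finite.mem_toFinset]; exact ⟨le_refl F, hFH, hF⟩
        rw [hemp] at this; exact absurd this (Finset.notMem_empty F))
  beta_reduce at hTP
  rw [Set.Finite.mem_toFinset] at hTP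
  obtain ⟨hFT, hTH, hTac⟩ := hTP
  refine ⟨T, hFT, hTH, hTac, ?_⟩
  intro K hTK hKH hKac
  by_contra hne
  have hKmem : K ∈ hPfin.toFinset := by
    rw [Set.Finite.mem_toFinset]; exact ⟨le_trans hFT hTK, hKH, hKac⟩
  exact hne (le_antisymm (hmax hKmem hTK) hTK)

lemma aux_reachable_of_maximal [Finite V] {T H : SimpleGraph V} (hTH : T ≤ H)
    (hTac : T.IsAcyclic) (hmax : ∀ K, T ≤ K → K ≤ H → K.IsAcyclic → K = T) {u v : V}
    (huv : H.Adj u v) : T.Reachable u v := by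
  by_cases hac : (T ⊔ edge u v).IsAcyclic
  · have heq := hmax (T ⊔ edge u v) le_sup_left (sup_le hTH (aux_edge_le huv)) hac
    have hadj : (T ⊔ edge u v).Adj u v := by
      rw [sup_adj]; right; rw [edge_adj]; exact ⟨Or.inl ⟨rfl, rfl⟩, huv.ne⟩
    rw [heq] at hadj
    exact hadj.reachable
  · exact aux_reachable_of_not_isAcyclic_sup_edge hTac hac

lemma aux_exists_adj_of_reachable_ne {F : SimpleGraph V} {u v : V}
    (h : F.Reachable u v) (hne : u ≠ v) : ∃ w, F.Adj u w := by
  obtain ⟨p⟩ := h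
  cases p with
  | nil => exact absurd rfl hne
  | cons h _ => exact ⟨_, h⟩

end Aux

theorem statement0 {V : Type*} [Fintype V] (G : SimpleGraph V)
    (hconn : G.Connected) (hGset : ∃ S : Set V, IsInd12Set G S) :
    ∃ (T : SimpleGraph V) (S : Set V), T ≤ G ∧ T.IsTree ∧ IsInd12Set T S ∧
      ∀ u v : V, G.Adj u v → ¬ T.Adj u v →
        ((u ∉ S ∧ v ∉ S) ∨ TypeB T S u v ∨ TypeB T S v u) := by
  classical
  obtain ⟨S, hSind, hS12⟩ := hGset
  set H₁ : SimpleGraph V := forestOf G S with hH₁def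
  have hH₁adj : ∀ a b, H₁.Adj a b ↔ G.Adj a b ∧ (a ∈ S ∨ b ∈ S) := fun a b => Iff.rfl
  have hH₁G : H₁ ≤ G := fun a b h => h.1
  obtain ⟨F, hbotF, hFH₁, hFac, hFmax⟩ :=
    aux_exists_maximal_acyclic (bot_le : (⊥ : SimpleGraph V) ≤ H₁) isAcyclic_bot
  obtain ⟨T, hFT, hTG, hTac, hTmax⟩ := aux_exists_maximal_acyclic (le_trans hFH₁ hH₁G) hFac
  -- every T-edge touching S is an F-edge
  have hTF : ∀ a b, T.Adj a b → (a ∈ S ∨ b ∈ S) → F.Adj a b := by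
    intro a b hT hmem
    by_contra hnF
    have hsupT : F ⊔ edge a b ≤ T := sup_le hFT (aux_edge_le hT)
    have hsupac : (F ⊔ edge a b).IsAcyclic := aux_isAcyclic_anti hsupT hTac
    have hsupH₁ : F ⊔ edge a b ≤ H₁ :=
      sup_le hFH₁ (aux_edge_le ((hH₁adj a b).2 ⟨hTG hT, hmem⟩))
    have heq := hFmax (F ⊔ edge a b) le_sup_left hsupH₁ hsupac
    apply hnF
    have hadj : (F ⊔ edge a b).Adj a b := by
      rw [sup_adj]; right; rw [edge_adj]; exact ⟨Or.inl ⟨rfl, rfl⟩, hT.ne⟩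
    rwa [heq] at hadj
  have hforest : forestOf T S = F := by
    ext a b
    constructor
    · rintro ⟨h1, h2⟩; exact hTF a b h1 h2
    · intro h; exact ⟨hFT h, (hFH₁ h).2⟩
  -- the S-neighborhoods in T coincide with F-neighborhoods
  have hSnbr : ∀ u ∉ S, S ∩ T.neighborSet u = F.neighborSet u := by
    intro u hu
    ext w
    constructor
    · rintro ⟨hwS, hadj⟩; exact hTF u w hadj (Or.inr hwS)
    · intro h; exact ⟨(hFH₁ h).2.resolve_left hu, hFT h⟩
  have hFsub : ∀ u ∉ S, F.neighborSet u ⊆ S ∩ G.neighborSet u := by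
    intro u hu w hw
    have := hFH₁ hw
    exact ⟨this.2.resolve_left hu, this.1⟩
  -- each u outside S has an F-neighbor
  have hFne : ∀ u ∉ S, (F.neighborSet u).Nonempty := by
    intro u hu
    have h1 := (hS12 u hu).1
    have hpos : 0 < (S ∩ G.neighborSet u).ncard := lt_of_lt_of_le Nat.zero_lt_one h1
    obtain ⟨v, hvS, hvadj⟩ := (Set.ncard_pos (Set.toFinite _)).1 hpos
    have hH₁uv : H₁.Adj u v := (hH₁adj u v).2 ⟨hvadj, Or.inr hvS⟩
    by_cases hF : F.Adj u v
    · exact ⟨v, hF⟩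
    · have hreach : F.Reachable u v := aux_reachable_of_maximal hFH₁ hFac hFmax hH₁uv
      obtain ⟨w, hw⟩ := aux_exists_adj_of_reachable_ne hreach hvadj.ne
      exact ⟨w, hw⟩
  have hFcard : ∀ u ∉ S, 1 ≤ (F.neighborSet u).ncard ∧ (F.neighborSet u).ncard ≤ 2 := by
    intro u hu
    constructor
    · exact (Set.ncard_pos (Set.toFinite _)).2 (hFne u hu)
    · exact le_trans (Set.ncard_le_ncard (hFsub u hu) (Set.toFinite _)) (hS12 u hu).2
  -- T is a spanning tree
  have hTconn : T.Connected := by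
    have hpre : T.Preconnected := by
      intro a b
      obtain ⟨p⟩ := hconn.preconnected a b
      induction p with
      | nil => exact Reachable.refl _
      | cons h _ ih => exact (aux_reachable_of_maximal hTG hTac hTmax h).trans ih
    rw [connected_iff]
    exact ⟨hpre, hconn.nonempty⟩
  -- TypeB in the one-endpoint-in-S case
  have hTypeB : ∀ u v : V, u ∉ S → v ∈ S → G.Adj u v → ¬ T.Adj u v → TypeB T S u v := by
    intro u v hu hv hG hnT
    have hnF : ¬ F.Adj u v := fun h => hnT (hFT h)
    have hH₁uv : H₁.Adj u v := (hH₁adj u v).2 ⟨hG, Or.inr hv⟩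
    have hreach : F.Reachable u v := aux_reachable_of_maximal hFH₁ hFac hFmax hH₁uv
    refine ⟨hv, hu, ?_, by rw [hforest]; exact hreach⟩
    rw [hSnbr u hu]
    have hsub : F.neighborSet u ⊆ (S ∩ G.neighborSet u) \ {v} := by
      intro w hw
      refine ⟨hFsub u hu hw, ?_⟩
      intro hwv
      rw [Set.mem_singleton_iff] at hwv
      exact hnF (hwv ▸ hw)
    have hvmem : v ∈ S ∩ G.neighborSet u := ⟨hv, hG⟩
    have hle : (F.neighborSet u).ncard ≤ ((S ∩ G.neighborSet u) \ {v}).ncard :=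
      Set.ncard_le_ncard hsub (Set.toFinite _)
    rw [Set.ncard_diff_singleton_of_mem hvmem] at hle
    have h2 := (hS12 u hu).2
    have h1 := (hFcard u hu).1
    omega
  refine ⟨T, S, hTG, ⟨hTconn, hTac⟩, ⟨?_, ?_⟩, ?_⟩
  · intro a ha b hb hadj
    exact hSind a ha b hb (hTG hadj)
  · intro u hu
    rw [hSnbr u hu]
    exact hFcard u hu
  · intro u v hG hnT
    by_cases hu : u ∈ S
    · by_cases hv : v ∈ S
      · exact absurd hG (hSind u hu v hv)
      · exact Or.inr (Or.inr (hTypeB v u hv hu hG.symm (fun h => hnT h.symm)))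
    · by_cases hv : v ∈ S
      · exact Or.inr (Or.inl (hTypeB u v hu hv hG hnT))
      · exact Or.inl ⟨hu, hv⟩
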